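/- Let ν ≥ 3, let Ψ be a set of coverings with #Ψ ≥ 2 which is decomposable via a nonempty proper E ⊆ Γ_{2ν}. For ψ ∈ Ψ define p⁰_ψ = Σ_{∅ ≠ A₁ ⊊ E∩A} (−1)^{#A₁} X^{A₁} X^{(E∩B) ∖ ψ(A₁)} and q⁰_ψ = Σ_{∅ ≠ A₂ ⊊ E'∩A} (−1)^{#A₂} X^{A₂} X^{(E'∩B) ∖ ψ(A₂)}, where X^S = ∏_{j∈S} X_j; note p⁰_ψ depends only on ψ|_{E∩A} and q⁰_ψ only on ψ|_{E'∩A}. Suppose the finitely many distinct polynomials {p⁰_ψ : ψ ∈ Ψ} form a linearly independent family over ℂ and likewise the distinct polynomials {q⁰_ψ : ψ ∈ Ψ} form a linearly independent family. If F_Ψ splits across the bipartition (E,E'), then Ψ is factorable via E, i.e., for all ψ₁, ψ₂ ∈ Ψ there exists ψ ∈ Ψ agreeing with ψ₁ on E∩A and with ψ₂ on E'∩A. -/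

import Mathlib

open MvPolynomial Finset

noncomputable section

/-- The odd-labelled site `2t−1` of the paper (`t`-th site of sublattice `A`),
zero-indexed as `2t` in `Fin (2ν)`. -/
def siteA (ν : ℕ) (t : Fin ν) : Fin (2 * ν) := ⟨2 * t.val, by have := t.isLt; omega⟩

/-- The even-labelled site `2t` of the paper (`t`-th site of sublattice `B`),
zero-indexed as `2t+1` in `Fin (2ν)`. -/
def siteB (ν : ℕ) (t : Fin ν) : Fin (2 * ν) := ⟨2 * t.val + 1, by have := t.isLt; omega⟩

/-- A covering is a bijection `ψ : A → B`; it is encoded by the permutation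
`σ` of `Fin ν` with `ψ(siteA t) = siteB (σ t)`.  Its covering polynomial is
`F_ψ = ∏_{a∈A} (X_{ψ(a)} − X_a)`. -/
def covPoly (ν : ℕ) (σ : Equiv.Perm (Fin ν)) : MvPolynomial (Fin (2 * ν)) ℂ :=
  ∏ t : Fin ν, (X (siteB ν (σ t)) - X (siteA ν t))

/-- `F` splits across the bipartition `(E, Eᶜ)`. -/
def SplitsAcross {n : ℕ} (F : MvPolynomial (Fin n) ℂ) (E : Finset (Fin n)) : Prop :=
  ∃ p q : MvPolynomial (Fin n) ℂ, F = p * q ∧ p.vars ⊆ E ∧ q.vars ⊆ Eᶜ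

/-- `ψ(E ∩ A) = E ∩ B` for the covering `ψ` encoded by `σ`
(here `E ∩ B` is the set of odd-indexed, i.e. `B`-sublattice, elements of `E`). -/
def MapsCut (ν : ℕ) (σ : Equiv.Perm (Fin ν)) (E : Finset (Fin (2 * ν))) : Prop :=
  ((Finset.univ.filter (fun t => siteA ν t ∈ E)).image fun t => siteB ν (σ t))
    = E.filter (fun x => x.val % 2 = 1)


/-- The (unnormalized) RVB polynomial `F_Ψ = Σ_{ψ∈Ψ} F_ψ`. -/
def rvbPoly (ν : ℕ) (Ψ : Finset (Equiv.Perm (Fin ν))) : MvPolynomial (Fin (2 * ν)) ℂ :=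
  ∑ σ ∈ Ψ, covPoly ν σ

/-- `p⁰_ψ = Σ_{∅ ≠ A₁ ⊊ E∩A} (−1)^{#A₁} X^{A₁} X^{(E∩B) ∖ ψ(A₁)}`, with subsets of
`E∩A` (resp. `E∩B`) encoded as subsets `T` of `Fin ν` with `siteA t ∈ E`
(resp. `siteB u ∈ E`). -/
def p0Poly (ν : ℕ) (E : Finset (Fin (2 * ν))) (σ : Equiv.Perm (Fin ν)) :
    MvPolynomial (Fin (2 * ν)) ℂ :=
  ∑ T ∈ (Finset.univ.filter (fun t => siteA ν t ∈ E)).powerset.filter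
      (fun T => T.Nonempty ∧ T ≠ Finset.univ.filter (fun t => siteA ν t ∈ E)),
    C ((-1 : ℂ) ^ T.card) *
      ((∏ t ∈ T, X (siteA ν t)) *
        ∏ u ∈ (Finset.univ.filter (fun u => siteB ν u ∈ E)) \ (T.image fun t => σ t),
          X (siteB ν u))

/-- `q⁰_ψ = Σ_{∅ ≠ A₂ ⊊ E'∩A} (−1)^{#A₂} X^{A₂} X^{(E'∩B) ∖ ψ(A₂)}`. -/
def q0Poly (ν : ℕ) (E : Finset (Fin (2 * ν))) (σ : Equiv.Perm (Fin ν)) :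
    MvPolynomial (Fin (2 * ν)) ℂ :=
  ∑ T ∈ (Finset.univ.filter (fun t => siteA ν t ∉ E)).powerset.filter
      (fun T => T.Nonempty ∧ T ≠ Finset.univ.filter (fun t => siteA ν t ∉ E)),
    C ((-1 : ℂ) ^ T.card) *
      ((∏ t ∈ T, X (siteA ν t)) *
        ∏ u ∈ (Finset.univ.filter (fun u => siteB ν u ∉ E)) \ (T.image fun t => σ t),
          X (siteB ν u))

namespace RVBAux

variable {ν : ℕ}

lemma siteA_inj (ν : ℕ) : Function.Injective (siteA ν) := by
  intro a b h
  simp only [siteA, Fin.mk.injEq] at h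
  exact Fin.ext (by omega)

lemma siteB_inj (ν : ℕ) : Function.Injective (siteB ν) := by
  intro a b h
  simp only [siteB, Fin.mk.injEq] at h
  exact Fin.ext (by omega)

lemma siteA_ne_siteB (ν : ℕ) (t u : Fin ν) : siteA ν t ≠ siteB ν u := by
  simp only [siteA, siteB, ne_eq, Fin.mk.injEq]
  omega

/-- indicator monomial of `A`-sites of `T` -/
def indA (ν : ℕ) (T : Finset (Fin ν)) : Fin (2 * ν) →₀ ℕ :=
  ∑ t ∈ T, Finsupp.single (siteA ν t) 1

/-- indicator monomial of `B`-sites of `U` -/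
def indB (ν : ℕ) (U : Finset (Fin ν)) : Fin (2 * ν) →₀ ℕ :=
  ∑ u ∈ U, Finsupp.single (siteB ν u) 1

lemma indA_apply_siteA (T : Finset (Fin ν)) (t : Fin ν) :
    indA ν T (siteA ν t) = if t ∈ T then 1 else 0 := by
  simp only [indA, Finsupp.finset_sum_apply, Finsupp.single_apply, (siteA_inj ν).eq_iff]
  exact Finset.sum_ite_eq' T t (fun _ => 1)

lemma indA_apply_siteB (T : Finset (Fin ν)) (u : Fin ν) :
    indA ν T (siteB ν u) = 0 := by
  rw [indA, Finsupp.finset_sum_apply]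
  exact Finset.sum_eq_zero fun t _ => by
    rw [Finsupp.single_apply, if_neg (siteA_ne_siteB ν t u)]

lemma indB_apply_siteB (U : Finset (Fin ν)) (u : Fin ν) :
    indB ν U (siteB ν u) = if u ∈ U then 1 else 0 := by
  simp only [indB, Finsupp.finset_sum_apply, Finsupp.single_apply, (siteB_inj ν).eq_iff]
  exact Finset.sum_ite_eq' U u (fun _ => 1)

lemma indB_apply_siteA (U : Finset (Fin ν)) (t : Fin ν) :
    indB ν U (siteA ν t) = 0 := by
  rw [indB, Finsupp.finset_sum_apply]
  exact Finset.sum_eq_zero fun u _ => by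
    rw [Finsupp.single_apply, if_neg (Ne.symm (siteA_ne_siteB ν t u))]


/-- the exponent monomial of the term indexed by `T` -/
def mono (ν : ℕ) (σ : Equiv.Perm (Fin ν)) (SB T : Finset (Fin ν)) : Fin (2 * ν) →₀ ℕ :=
  indA ν T + indB ν (SB \ T.image fun t => σ t)

lemma mono_apply_siteA (σ : Equiv.Perm (Fin ν)) (SB T : Finset (Fin ν)) (t : Fin ν) :
    mono ν σ SB T (siteA ν t) = if t ∈ T then 1 else 0 := by
  rw [mono, Finsupp.add_apply, indA_apply_siteA, indB_apply_siteA, add_zero]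

lemma mono_apply_siteB (σ : Equiv.Perm (Fin ν)) (SB T : Finset (Fin ν)) (u : Fin ν) :
    mono ν σ SB T (siteB ν u) = if u ∈ SB \ T.image (fun t => σ t) then 1 else 0 := by
  rw [mono, Finsupp.add_apply, indA_apply_siteB, indB_apply_siteB, zero_add]

lemma mono_inj (σ : Equiv.Perm (Fin ν)) (SB : Finset (Fin ν)) {T T' : Finset (Fin ν)}
    (h : mono ν σ SB T = mono ν σ SB T') : T = T' := by
  ext t
  have h1 := DFunLike.congr_fun h (siteA ν t)
  rw [mono_apply_siteA, mono_apply_siteA] at h1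
  by_cases hT : t ∈ T <;> by_cases hT' : t ∈ T' <;> simp [hT, hT'] at h1 ⊢

lemma prod_X_comp {ι : Type*} (f : ι → Fin (2 * ν)) (s : Finset ι) :
    (∏ i ∈ s, (X (f i) : MvPolynomial (Fin (2 * ν)) ℂ))
      = monomial (∑ i ∈ s, Finsupp.single (f i) 1) 1 := by
  classical
  induction s using Finset.cons_induction with
  | empty => simp
  | cons a s ha ih =>
      rw [Finset.prod_cons, Finset.sum_cons, ih, X, monomial_mul, one_mul]

lemma prod_negX_comp {ι : Type*} (f : ι → Fin (2 * ν)) (s : Finset ι) :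
    (∏ i ∈ s, (-X (f i) : MvPolynomial (Fin (2 * ν)) ℂ))
      = C ((-1 : ℂ) ^ s.card) * monomial (∑ i ∈ s, Finsupp.single (f i) 1) 1 := by
  classical
  have : ∀ i ∈ s, (-X (f i) : MvPolynomial (Fin (2 * ν)) ℂ) = C (-1) * X (f i) := by
    intro i _
    rw [map_neg, map_one, neg_one_mul]
  rw [Finset.prod_congr rfl this, Finset.prod_mul_distrib, Finset.prod_const, prod_X_comp,
    ← map_pow]

/-- generic version of `p0Poly`/`q0Poly` -/
def genp0 (ν : ℕ) (SA SB : Finset (Fin ν)) (σ : Equiv.Perm (Fin ν)) :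
    MvPolynomial (Fin (2 * ν)) ℂ :=
  ∑ T ∈ SA.powerset.filter (fun T => T.Nonempty ∧ T ≠ SA),
    C ((-1 : ℂ) ^ T.card) *
      ((∏ t ∈ T, X (siteA ν t)) *
        ∏ u ∈ SB \ (T.image fun t => σ t), X (siteB ν u))

lemma genp0_eq (SA SB : Finset (Fin ν)) (σ : Equiv.Perm (Fin ν)) :
    genp0 ν SA SB σ
      = ∑ T ∈ SA.powerset.filter (fun T => T.Nonempty ∧ T ≠ SA),
          monomial (mono ν σ SB T) ((-1 : ℂ) ^ T.card) := by
  refine Finset.sum_congr rfl fun T _ => ?_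
  rw [prod_X_comp, prod_X_comp, monomial_mul, one_mul, C_mul_monomial, mul_one]
  rfl

lemma genP_expand (SA : Finset (Fin ν)) (σ : Equiv.Perm (Fin ν)) :
    (∏ t ∈ SA, (X (siteB ν (σ t)) - X (siteA ν t)) : MvPolynomial (Fin (2 * ν)) ℂ)
      = ∑ T ∈ SA.powerset, monomial (mono ν σ (SA.image fun t => σ t) T) ((-1 : ℂ) ^ T.card) := by
  classical
  rw [Finset.prod_congr rfl
    (fun t _ => sub_eq_add_neg (X (siteB ν (σ t)) : MvPolynomial (Fin (2 * ν)) ℂ) (X (siteA ν t))),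
    Finset.prod_add]
  refine Finset.sum_nbij' (fun T => SA \ T) (fun T => SA \ T) ?_ ?_ ?_ ?_ ?_
  · intro T hT; exact Finset.mem_powerset.2 (Finset.sdiff_subset)
  · intro T hT; exact Finset.mem_powerset.2 (Finset.sdiff_subset)
  · intro T hT; exact Finset.sdiff_sdiff_eq_self (Finset.mem_powerset.1 hT)
  · intro T hT; exact Finset.sdiff_sdiff_eq_self (Finset.mem_powerset.1 hT)
  · intro T hT
    have hTsub := Finset.mem_powerset.1 hT
    have hinj : Set.InjOn (fun t => σ t) ↑SA := fun a _ b _ hab => σ.injective hab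
    rw [prod_negX_comp, ← Finset.prod_image
        (f := fun u => (X (siteB ν u) : MvPolynomial (Fin (2 * ν)) ℂ))
        (g := fun t => σ t) (fun a _ b _ hab => σ.injective hab),
      prod_X_comp]
    rw [mono]
    have himg : (SA.image fun t => σ t) \ ((SA \ T).image fun t => σ t) = T.image fun t => σ t := by
      rw [← Finset.image_sdiff SA (SA \ T) (fun a b hab => σ.injective hab),
        Finset.sdiff_sdiff_eq_self hTsub]
    rw [himg]
    have hcard : (SA \ T).card = SA.card - T.card := Finset.card_sdiff_of_subset hTsub
    have hmul : ∀ (d e : Fin (2 * ν) →₀ ℕ) (c : ℂ),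
        ((monomial d) 1 * (C c * (monomial e) 1) : MvPolynomial (Fin (2 * ν)) ℂ)
          = monomial (e + d) c := by
      intro d e c
      rw [mul_left_comm, monomial_mul, mul_one, C_mul_monomial, mul_one, add_comm]
    rw [hmul]
    rfl

lemma genP_eq (SA SB : Finset (Fin ν)) (σ : Equiv.Perm (Fin ν)) (hne : SA.Nonempty)
    (himg : (SA.image fun t => σ t) = SB) :
    (∏ t ∈ SA, (X (siteB ν (σ t)) - X (siteA ν t)) : MvPolynomial (Fin (2 * ν)) ℂ)
      = (monomial (indB ν SB) 1 + monomial (indA ν SA) ((-1 : ℂ) ^ SA.card))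
        + genp0 ν SA SB σ := by
  classical
  rw [genP_expand, himg, genp0_eq,
    ← Finset.sum_filter_add_sum_filter_not SA.powerset (fun T => T.Nonempty ∧ T ≠ SA),
    add_comm]
  congr 1
  have hset : SA.powerset.filter (fun T => ¬(T.Nonempty ∧ T ≠ SA)) = {∅, SA} := by
    ext T
    simp only [Finset.mem_filter, Finset.mem_powerset, not_and_or, not_ne_iff,
      Finset.not_nonempty_iff_eq_empty, Finset.mem_insert, Finset.mem_singleton]
    constructor
    · rintro ⟨_, h | h⟩
      · exact Or.inl h
      · exact Or.inr h
    · rintro (rfl | rfl)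
      · exact ⟨Finset.empty_subset _, Or.inl rfl⟩
      · exact ⟨subset_rfl, Or.inr rfl⟩
  rw [hset, Finset.sum_insert (by simpa using (Ne.symm hne.ne_empty)), Finset.sum_singleton]
  congr 1
  · rw [mono]
    simp only [Finset.image_empty, Finset.sdiff_empty, Finset.card_empty, pow_zero]
    rw [indA, Finset.sum_empty, zero_add]
  · rw [mono, himg, Finset.sdiff_self, indB, Finset.sum_empty, add_zero]


lemma coeff_genp0_indB (SA SB : Finset (Fin ν)) (σ : Equiv.Perm (Fin ν)) :
    coeff (indB ν SB) (genp0 ν SA SB σ) = 0 := by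
  rw [genp0_eq, coeff_sum]
  refine Finset.sum_eq_zero fun T hT => ?_
  rw [coeff_monomial, if_neg]
  intro h
  obtain ⟨t, ht⟩ := (Finset.mem_filter.1 hT).2.1
  have h1 := DFunLike.congr_fun h (siteA ν t)
  rw [mono_apply_siteA, if_pos ht, indB_apply_siteA] at h1
  exact one_ne_zero h1

lemma coeff_genp0_single (SA SB : Finset (Fin ν)) (σ : Equiv.Perm (Fin ν))
    (h2 : 2 ≤ SA.card) {t : Fin ν} (ht : t ∈ SA) :
    coeff (mono ν σ SB {t}) (genp0 ν SA SB σ) = -1 := by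
  have hmem : ({t} : Finset (Fin ν)) ∈
      SA.powerset.filter (fun T => T.Nonempty ∧ T ≠ SA) := by
    refine Finset.mem_filter.2 ⟨Finset.mem_powerset.2 (Finset.singleton_subset_iff.2 ht),
      Finset.singleton_nonempty t, fun h => ?_⟩
    rw [← h] at h2
    simp at h2
  rw [genp0_eq, coeff_sum, Finset.sum_eq_single_of_mem _ hmem]
  · rw [coeff_monomial, if_pos rfl, Finset.card_singleton, pow_one]
  · intro T _ hne
    rw [coeff_monomial, if_neg fun h => hne (mono_inj σ SB h)]

lemma genp0_inj (SA SB : Finset (Fin ν)) (σ σ' : Equiv.Perm (Fin ν))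
    (h2 : 2 ≤ SA.card)
    (himg : (SA.image fun t => σ t) = SB) (himg' : (SA.image fun t => σ' t) = SB)
    (h : genp0 ν SA SB σ = genp0 ν SA SB σ') :
    ∀ t ∈ SA, σ t = σ' t := by
  intro t ht
  by_contra hne
  have hσB : σ t ∈ SB := himg ▸ Finset.mem_image_of_mem _ ht
  have hσ'B : σ' t ∈ SB := himg' ▸ Finset.mem_image_of_mem _ ht
  have hc : coeff (mono ν σ SB {t}) (genp0 ν SA SB σ') = -1 := by
    rw [← h, coeff_genp0_single SA SB σ h2 ht]
  rw [genp0_eq, coeff_sum] at hc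
  have hzero : ∀ T ∈ SA.powerset.filter (fun T => T.Nonempty ∧ T ≠ SA),
      coeff (mono ν σ SB {t}) (monomial (mono ν σ' SB T) ((-1 : ℂ) ^ T.card)) = 0 := by
    intro T _
    rw [coeff_monomial, if_neg]
    intro hTeq
    have hTt : T = {t} := by
      ext s
      have h1 := DFunLike.congr_fun hTeq (siteA ν s)
      rw [mono_apply_siteA, mono_apply_siteA] at h1
      by_cases hs : s ∈ T <;> by_cases hs' : s ∈ ({t} : Finset (Fin ν)) <;>
        simp [hs, hs'] at h1 ⊢
    subst hTt
    have h1 := DFunLike.congr_fun hTeq (siteB ν (σ t))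
    rw [mono_apply_siteB, mono_apply_siteB] at h1
    rw [Finset.image_singleton, Finset.image_singleton] at h1
    rw [if_pos (Finset.mem_sdiff.2 ⟨hσB, by simpa using hne⟩),
      if_neg (fun hmem => (Finset.mem_sdiff.1 hmem).2 (Finset.mem_singleton_self _))] at h1
    exact one_ne_zero h1
  rw [Finset.sum_eq_zero hzero] at hc
  exact (by norm_num : (0 : ℂ) ≠ -1) hc

lemma genp0_zero (SA SB : Finset (Fin ν)) (σ : Equiv.Perm (Fin ν)) (h : SA.card ≤ 1) :
    genp0 ν SA SB σ = 0 := by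
  rw [genp0]
  refine Finset.sum_eq_zero fun T hT => ?_
  exfalso
  obtain ⟨hsub, hne, hneq⟩ := Finset.mem_filter.1 hT
  rw [Finset.mem_powerset] at hsub
  exact hneq (Finset.eq_of_subset_of_card_le hsub (h.trans (Finset.card_pos.2 hne)))

lemma support_prod_sub (SA : Finset (Fin ν)) (σ : Equiv.Perm (Fin ν))
    (E' : Finset (Fin (2 * ν)))
    (hA : ∀ t ∈ SA, siteA ν t ∈ E') (hB : ∀ t ∈ SA, siteB ν (σ t) ∈ E') :
    ∀ d ∈ (∏ t ∈ SA, (X (siteB ν (σ t)) - X (siteA ν t)) :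
        MvPolynomial (Fin (2 * ν)) ℂ).support, ∀ i ∈ d.support, i ∈ E' := by
  classical
  intro d hd i hi
  have hv : i ∈ (∏ t ∈ SA, (X (siteB ν (σ t)) - X (siteA ν t)) :
      MvPolynomial (Fin (2 * ν)) ℂ).vars := (mem_vars i).2 ⟨d, hd, hi⟩
  have hsub : (∏ t ∈ SA, (X (siteB ν (σ t)) - X (siteA ν t)) :
      MvPolynomial (Fin (2 * ν)) ℂ).vars ⊆
      SA.biUnion fun t => (X (siteB ν (σ t)) - X (siteA ν t) :
        MvPolynomial (Fin (2 * ν)) ℂ).vars :=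
    vars_prod _
  have := hsub hv
  obtain ⟨t, htSA, hti⟩ := Finset.mem_biUnion.1 this
  have := vars_sub_subset (p := (X (siteB ν (σ t)) : MvPolynomial (Fin (2 * ν)) ℂ)) (q := X (siteA ν t)) hti
  rw [vars_X, vars_X] at this
  rcases Finset.mem_union.1 this with h | h
  · rw [Finset.mem_singleton] at h
    exact h ▸ hB t htSA
  · rw [Finset.mem_singleton] at h
    exact h ▸ hA t htSA


section LinAlg

variable {M : Type*} [AddCommGroup M] [Module ℂ M]

lemma finset_li {S : Finset M}
    (hLI : LinearIndependent ℂ (fun x : (↑S : Set M) => (x : M)))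
    (f : M → ℂ) (hsum : ∑ v ∈ S, f v • v = 0) : ∀ v ∈ S, f v = 0 := by
  classical
  set l : M →₀ ℂ := ∑ v ∈ S, Finsupp.single v (f v) with hl
  have hlv : ∀ v ∈ S, l v = f v := by
    intro v hv
    rw [hl, Finsupp.finset_sum_apply]
    rw [Finset.sum_congr rfl (fun w _ => Finsupp.single_apply)]
    exact (Finset.sum_ite_eq' S v f).trans (if_pos hv)
  have hlsupp : l ∈ Finsupp.supported ℂ ℂ (↑S : Set M) := by
    rw [Finsupp.mem_supported]
    intro v hv
    by_contra hvS
    have : l v = 0 := by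
      rw [hl, Finsupp.finset_sum_apply]
      refine Finset.sum_eq_zero fun w hw => ?_
      rw [Finsupp.single_apply, if_neg]
      intro h; exact hvS (by simpa [h] using (Finset.mem_coe.2 hw))
    exact (Finsupp.mem_support_iff.1 hv) this
  have hcomb : Finsupp.linearCombination ℂ (id : M → M) l = 0 := by
    rw [hl, map_sum]
    simp only [Finsupp.linearCombination_single, id_eq]
    exact hsum
  have hl0 : l = 0 := linearIndepOn_iff.1 (linearIndependent_subtype_iff.1 hLI) l hlsupp hcomb
  intro v hv
  rw [← hlv v hv, hl0]
  rfl

lemma li_of_finset {S : Finset M}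
    (h : ∀ f : M → ℂ, ∑ v ∈ S, f v • v = 0 → ∀ v ∈ S, f v = 0) :
    LinearIndependent ℂ (fun x : (↑S : Set M) => (x : M)) := by
  classical
  rw [linearIndependent_subtype_iff, linearIndepOn_iff]
  intro l hl hcomb
  have hsupp : l.support ⊆ S := by
    intro v hv
    exact Finset.mem_coe.1 ((Finsupp.mem_supported ℂ l).1 hl hv)
  have hsum : ∑ v ∈ S, l v • v = 0 := by
    rw [← hcomb, Finsupp.linearCombination_apply, Finsupp.sum]
    refine (Finset.sum_subset hsupp fun v _ hv => ?_).symm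
    rw [Finsupp.notMem_support_iff.1 hv, zero_smul]
  have := h l hsum
  ext v
  by_cases hv : v ∈ S
  · exact this v hv
  · exact Finsupp.notMem_support_iff.1 fun hc => hv (hsupp hc)

open scoped Classical in
lemma exists_dual (S : Finset M)
    (hLI : LinearIndependent ℂ (fun x : (↑S : Set M) => (x : M)))
    {v₀ : M} (hv₀ : v₀ ∈ S) :
    ∃ g : M →ₗ[ℂ] ℂ, ∀ v ∈ S, g v = if v = v₀ then 1 else 0 := by
  classical
  set W := Submodule.span ℂ (Set.range (fun x : (↑S : Set M) => (x : M))) with hW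
  obtain ⟨q, hq⟩ := W.exists_isCompl
  let b : Module.Basis (↑S : Set M) ℂ W := Module.Basis.span hLI
  refine ⟨(b.coord ⟨v₀, hv₀⟩).comp (Submodule.projectionOnto W q hq), fun v hv => ?_⟩
  have hvW : v ∈ W := Submodule.subset_span ⟨⟨v, hv⟩, rfl⟩
  have hproj : Submodule.projectionOnto W q hq v = ⟨v, hvW⟩ := by
    have := Submodule.projectionOnto_apply_left hq (⟨v, hvW⟩ : W)
    simpa using this
  have hb : b ⟨v, hv⟩ = ⟨v, hvW⟩ := by
    apply Subtype.ext
    exact congrArg Subtype.val (Module.Basis.span_apply hLI _)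
  rw [LinearMap.comp_apply, hproj, ← hb, Module.Basis.coord_apply, Module.Basis.repr_self]
  by_cases hvv : v = v₀
  · subst hvv
    simp [Finsupp.single_apply]
  · rw [Finsupp.single_apply, if_neg (fun h => hvv (congrArg Subtype.val h)), if_neg hvv]

end LinAlg


section Poly

variable {n : ℕ}

lemma li_shift {S : Finset (MvPolynomial (Fin n) ℂ)} (c : MvPolynomial (Fin n) ℂ)
    (μ₀ : Fin n →₀ ℕ) (hc : coeff μ₀ c = 1) (h0 : ∀ v ∈ S, coeff μ₀ v = 0)
    (hLI : LinearIndependent ℂ (fun x : (↑S : Set (MvPolynomial (Fin n) ℂ)) =>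
      (x : MvPolynomial (Fin n) ℂ))) :
    LinearIndependent ℂ
      (fun x : (↑(S.image (fun v => c + v)) : Set (MvPolynomial (Fin n) ℂ)) =>
        (x : MvPolynomial (Fin n) ℂ)) := by
  classical
  apply li_of_finset
  intro f hsum w hw
  rw [Finset.sum_image (fun x _ y _ h => add_left_cancel h)] at hsum
  have hs0 : ∑ v ∈ S, f (c + v) = 0 := by
    have h1 := congrArg (coeff μ₀) hsum
    rw [coeff_sum] at h1
    simp only [coeff_smul, coeff_add, hc, smul_eq_mul] at h1
    rw [Finset.sum_congr rfl (fun v hv => by rw [h0 v hv, add_zero, mul_one])] at h1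
    simpa using h1
  have hsum2 : ∑ v ∈ S, f (c + v) • v = 0 := by
    have h2 : ∑ v ∈ S, f (c + v) • (c + v)
        = (∑ v ∈ S, f (c + v)) • c + ∑ v ∈ S, f (c + v) • v := by
      rw [Finset.sum_smul]
      rw [← Finset.sum_add_distrib]
      exact Finset.sum_congr rfl fun v _ => smul_add _ _ _
    rw [h2, hs0, zero_smul, zero_add] at hsum
    exact hsum
  obtain ⟨v, hv, rfl⟩ := Finset.mem_image.1 hw
  exact finset_li hLI (fun w => f (c + w)) hsum2 v hv

lemma pairing_eq (g : MvPolynomial (Fin n) ℂ →ₗ[ℂ] ℂ) (T : Finset (Fin n →₀ ℕ))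
    (u : MvPolynomial (Fin n) ℂ) (hu : u.support ⊆ T) :
    ∑ m ∈ T, coeff m u * g (monomial m 1) = g u := by
  classical
  have hrep : u = ∑ m ∈ T, (coeff m u) • (monomial m 1 : MvPolynomial (Fin n) ℂ) := by
    have h1 : ∀ m, (coeff m u) • (monomial m 1 : MvPolynomial (Fin n) ℂ)
        = monomial m (coeff m u) := by
      intro m
      rw [smul_monomial, smul_eq_mul, mul_one]
    rw [Finset.sum_congr rfl (fun m _ => h1 m)]
    rw [← Finset.sum_subset hu (fun m _ hm => by
      rw [MvPolynomial.notMem_support_iff.1 hm, map_zero])]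
    exact (as_sum u)
  conv_rhs => rw [hrep]
  rw [map_sum]
  exact Finset.sum_congr rfl fun m _ => by rw [map_smul, smul_eq_mul]

lemma coeff_mul_split (E : Finset (Fin n)) (u v : MvPolynomial (Fin n) ℂ)
    (hu : ∀ d ∈ u.support, ∀ i ∈ d.support, i ∈ E)
    (hv : ∀ d ∈ v.support, ∀ i ∈ d.support, i ∉ E)
    (m m' : Fin n →₀ ℕ)
    (hm : ∀ i ∈ m.support, i ∈ E) (hm' : ∀ i ∈ m'.support, i ∉ E) :
    coeff (m + m') (u * v) = coeff m u * coeff m' v := by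
  classical
  rw [coeff_mul]
  refine Finset.sum_eq_single_of_mem (m, m') (Finset.HasAntidiagonal.mem_antidiagonal.2 rfl) ?_
  rintro ⟨d₁, d₂⟩ hp hne
  by_contra h0
  have h1 : coeff d₁ u ≠ 0 := fun h => h0 (by simp [h])
  have h2 : coeff d₂ v ≠ 0 := fun h => h0 (by simp [h])
  have hd₁ : ∀ i ∈ d₁.support, i ∈ E := hu d₁ (MvPolynomial.mem_support_iff.2 h1)
  have hd₂ : ∀ i ∈ d₂.support, i ∉ E := hv d₂ (MvPolynomial.mem_support_iff.2 h2)
  have hadd : d₁ + d₂ = m + m' := Finset.HasAntidiagonal.mem_antidiagonal.1 hp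
  apply hne
  have hkey : ∀ i, d₁ i = m i ∧ d₂ i = m' i := by
    intro i
    have hsumi : d₁ i + d₂ i = m i + m' i := by
      have := DFunLike.congr_fun hadd i
      simpa using this
    by_cases hiE : i ∈ E
    · have hz2 : d₂ i = 0 := by
        by_contra h
        exact hd₂ i (Finsupp.mem_support_iff.2 h) hiE
      have hz2' : m' i = 0 := by
        by_contra h
        exact hm' i (Finsupp.mem_support_iff.2 h) hiE
      omega
    · have hz1 : d₁ i = 0 := by
        by_contra h
        exact hiE (hd₁ i (Finsupp.mem_support_iff.2 h))
      have hz1' : m i = 0 := by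
        by_contra h
        exact hiE (hm i (Finsupp.mem_support_iff.2 h))
      omega
  exact Prod.ext (Finsupp.ext fun i => (hkey i).1) (Finsupp.ext fun i => (hkey i).2)

end Poly


lemma exists_siteB (x : Fin (2 * ν)) (h : x.val % 2 = 1) : ∃ u : Fin ν, siteB ν u = x := by
  refine ⟨⟨x.val / 2, by have := x.isLt; omega⟩, ?_⟩
  simp only [siteB]
  exact Fin.ext (by simp; omega)

lemma val_siteB_odd (u : Fin ν) : (siteB ν u).val % 2 = 1 := by
  simp [siteB]

end RVBAux

/-- Theorem 3.5: suppose `Ψ` is decomposable via `E` and the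
families of distinct polynomials `{p⁰_ψ : ψ ∈ Ψ}` and `{q⁰_ψ : ψ ∈ Ψ}` are each
linearly independent over `ℂ`.  If `F_Ψ` splits across `(E,E')`, then `Ψ` is
factorable via `E`. -/
theorem stmt_14 (ν : ℕ) (hν : 3 ≤ ν) (Ψ : Finset (Equiv.Perm (Fin ν)))
    (hΨ : 2 ≤ Ψ.card)
    (E : Finset (Fin (2 * ν))) (hE : E.Nonempty) (hE' : E ≠ Finset.univ)
    (hdec : ∀ σ ∈ Ψ, MapsCut ν σ E)
    (hindp : LinearIndependent ℂ
      (fun v : {p : MvPolynomial (Fin (2 * ν)) ℂ | ∃ σ ∈ Ψ, p0Poly ν E σ = p} =>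
        (v : MvPolynomial (Fin (2 * ν)) ℂ)))
    (hindq : LinearIndependent ℂ
      (fun v : {p : MvPolynomial (Fin (2 * ν)) ℂ | ∃ σ ∈ Ψ, q0Poly ν E σ = p} =>
        (v : MvPolynomial (Fin (2 * ν)) ℂ)))
    (hsplit : SplitsAcross (rvbPoly ν Ψ) E) :
    ∀ σ₁ ∈ Ψ, ∀ σ₂ ∈ Ψ, ∃ σ ∈ Ψ,
      (∀ t : Fin ν, siteA ν t ∈ E → σ t = σ₁ t) ∧
      (∀ t : Fin ν, siteA ν t ∉ E → σ t = σ₂ t) := by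
  classical
  intro σ₁ hσ₁ σ₂ hσ₂
  obtain ⟨p, q, hpq, hpv, hqv⟩ := hsplit
  set SA₁ : Finset (Fin ν) := Finset.univ.filter (fun t => siteA ν t ∈ E) with hSA₁def
  set SB₁ : Finset (Fin ν) := Finset.univ.filter (fun u => siteB ν u ∈ E) with hSB₁def
  set SA₂ : Finset (Fin ν) := Finset.univ.filter (fun t => siteA ν t ∉ E) with hSA₂def
  set SB₂ : Finset (Fin ν) := Finset.univ.filter (fun u => siteB ν u ∉ E) with hSB₂def
  have hp0 : ∀ σ', p0Poly ν E σ' = RVBAux.genp0 ν SA₁ SB₁ σ' := fun _ => rfl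
  have hq0 : ∀ σ', q0Poly ν E σ' = RVBAux.genp0 ν SA₂ SB₂ σ' := fun _ => rfl
  -- image facts
  have hoddB : E.filter (fun x => x.val % 2 = 1) = SB₁.image (fun u => siteB ν u) := by
    ext x
    simp only [Finset.mem_filter, Finset.mem_image, hSB₁def, Finset.mem_univ, true_and]
    constructor
    · rintro ⟨hxE, hodd⟩
      obtain ⟨u, hu⟩ := RVBAux.exists_siteB x hodd
      exact ⟨u, by rw [hu]; exact hxE, hu⟩
    · rintro ⟨u, huE, rfl⟩
      exact ⟨huE, RVBAux.val_siteB_odd u⟩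
  have himg₁ : ∀ σ ∈ Ψ, (SA₁.image fun t => σ t) = SB₁ := by
    intro σ hσ
    have h := hdec σ hσ
    rw [MapsCut] at h
    apply Finset.image_injective (RVBAux.siteB_inj ν)
    rw [Finset.image_image]
    rw [← hSA₁def] at h
    rw [show ((fun u => siteB ν u) ∘ fun t => σ t) = fun t => siteB ν (σ t) from rfl]
    rw [h, hoddB]
  have hmemBA : ∀ σ ∈ Ψ, ∀ u : Fin ν, σ.symm u ∈ SA₁ ↔ u ∈ SB₁ := by
    intro σ hσ u
    rw [← himg₁ σ hσ]
    constructor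
    · intro h
      exact Finset.mem_image.2 ⟨σ.symm u, h, σ.apply_symm_apply u⟩
    · intro h
      obtain ⟨t, ht, hts⟩ := Finset.mem_image.1 h
      rwa [← hts, Equiv.symm_apply_apply]
  have himg₂ : ∀ σ ∈ Ψ, (SA₂.image fun t => σ t) = SB₂ := by
    intro σ hσ
    ext u
    have h1 : u ∈ (SA₂.image fun t => σ t) ↔ σ.symm u ∈ SA₂ := by
      constructor
      · intro h
        obtain ⟨t, ht, hts⟩ := Finset.mem_image.1 h
        rwa [← hts, Equiv.symm_apply_apply]
      · intro h
        exact Finset.mem_image.2 ⟨σ.symm u, h, σ.apply_symm_apply u⟩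
    rw [h1, hSA₂def, hSB₂def]
    simp only [Finset.mem_filter, Finset.mem_univ, true_and]
    have := hmemBA σ hσ u
    rw [hSA₁def, hSB₁def] at this
    simp only [Finset.mem_filter, Finset.mem_univ, true_and] at this
    exact not_congr this
  -- nondegeneracy
  have hΨne : Ψ.Nonempty := Finset.card_pos.1 (by omega)
  have h2A : 2 ≤ SA₁.card := by
    by_contra h
    push_neg at h
    have hmem : (0 : MvPolynomial (Fin (2 * ν)) ℂ)
        ∈ {p : MvPolynomial (Fin (2 * ν)) ℂ | ∃ σ ∈ Ψ, p0Poly ν E σ = p} :=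
      ⟨hΨne.choose, hΨne.choose_spec, by
        rw [hp0, RVBAux.genp0_zero SA₁ SB₁ _ (by omega)]⟩
    exact hindp.ne_zero ⟨0, hmem⟩ rfl
  have h2B : 2 ≤ SA₂.card := by
    by_contra h
    push_neg at h
    have hmem : (0 : MvPolynomial (Fin (2 * ν)) ℂ)
        ∈ {p : MvPolynomial (Fin (2 * ν)) ℂ | ∃ σ ∈ Ψ, q0Poly ν E σ = p} :=
      ⟨hΨne.choose, hΨne.choose_spec, by
        rw [hq0, RVBAux.genp0_zero SA₂ SB₂ _ (by omega)]⟩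
    exact hindq.ne_zero ⟨0, hmem⟩ rfl
  have hSA₁ne : SA₁.Nonempty := Finset.card_pos.1 (by omega)
  have hSA₂ne : SA₂.Nonempty := Finset.card_pos.1 (by omega)
  -- P and Q
  set P : Equiv.Perm (Fin ν) → MvPolynomial (Fin (2 * ν)) ℂ :=
    fun σ => ∏ t ∈ SA₁, (X (siteB ν (σ t)) - X (siteA ν t)) with hPdef
  set Q : Equiv.Perm (Fin ν) → MvPolynomial (Fin (2 * ν)) ℂ :=
    fun σ => ∏ t ∈ SA₂, (X (siteB ν (σ t)) - X (siteA ν t)) with hQdef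
  have hPQ : ∀ σ, covPoly ν σ = P σ * Q σ := by
    intro σ
    rw [covPoly, hPdef, hQdef]
    exact (Finset.prod_filter_mul_prod_filter_not Finset.univ
      (fun t => siteA ν t ∈ E) _).symm
  set cP : MvPolynomial (Fin (2 * ν)) ℂ :=
    monomial (RVBAux.indB ν SB₁) 1 + monomial (RVBAux.indA ν SA₁) ((-1 : ℂ) ^ SA₁.card)
    with hcPdef
  set cQ : MvPolynomial (Fin (2 * ν)) ℂ :=
    monomial (RVBAux.indB ν SB₂) 1 + monomial (RVBAux.indA ν SA₂) ((-1 : ℂ) ^ SA₂.card)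
    with hcQdef
  have hPc : ∀ σ ∈ Ψ, P σ = cP + RVBAux.genp0 ν SA₁ SB₁ σ :=
    fun σ hσ => RVBAux.genP_eq SA₁ SB₁ σ hSA₁ne (himg₁ σ hσ)
  have hQc : ∀ σ ∈ Ψ, Q σ = cQ + RVBAux.genp0 ν SA₂ SB₂ σ :=
    fun σ hσ => RVBAux.genP_eq SA₂ SB₂ σ hSA₂ne (himg₂ σ hσ)
  -- linear independence transfer
  have hsetP : {p : MvPolynomial (Fin (2 * ν)) ℂ | ∃ σ ∈ Ψ, p0Poly ν E σ = p}
      = ↑(Ψ.image (fun σ => RVBAux.genp0 ν SA₁ SB₁ σ)) := by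
    ext x
    simp only [Set.mem_setOf_eq, Finset.coe_image, Set.mem_image, Finset.mem_coe]
    constructor
    · rintro ⟨σ, hσ, hx⟩; exact ⟨σ, hσ, hx⟩
    · rintro ⟨σ, hσ, hx⟩; exact ⟨σ, hσ, hx⟩
  have hsetQ : {p : MvPolynomial (Fin (2 * ν)) ℂ | ∃ σ ∈ Ψ, q0Poly ν E σ = p}
      = ↑(Ψ.image (fun σ => RVBAux.genp0 ν SA₂ SB₂ σ)) := by
    ext x
    simp only [Set.mem_setOf_eq, Finset.coe_image, Set.mem_image, Finset.mem_coe]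
    constructor
    · rintro ⟨σ, hσ, hx⟩; exact ⟨σ, hσ, hx⟩
    · rintro ⟨σ, hσ, hx⟩; exact ⟨σ, hσ, hx⟩
  rw [hsetP] at hindp
  rw [hsetQ] at hindq
  have hμP : coeff (RVBAux.indB ν SB₁) cP = 1 := by
    rw [hcPdef, coeff_add, coeff_monomial, coeff_monomial, if_pos rfl, if_neg, add_zero]
    intro hcontra
    obtain ⟨t, ht⟩ := hSA₁ne
    have h1 := DFunLike.congr_fun hcontra (siteA ν t)
    rw [RVBAux.indA_apply_siteA, if_pos ht, RVBAux.indB_apply_siteA] at h1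
    exact one_ne_zero h1
  have hμQ : coeff (RVBAux.indB ν SB₂) cQ = 1 := by
    rw [hcQdef, coeff_add, coeff_monomial, coeff_monomial, if_pos rfl, if_neg, add_zero]
    intro hcontra
    obtain ⟨t, ht⟩ := hSA₂ne
    have h1 := DFunLike.congr_fun hcontra (siteA ν t)
    rw [RVBAux.indA_apply_siteA, if_pos ht, RVBAux.indB_apply_siteA] at h1
    exact one_ne_zero h1
  have hLIP : LinearIndependent ℂ
      (fun x : (↑(Ψ.image P) : Set (MvPolynomial (Fin (2 * ν)) ℂ)) =>
        (x : MvPolynomial (Fin (2 * ν)) ℂ)) := by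
    have himP : Ψ.image P
        = (Ψ.image (fun σ => RVBAux.genp0 ν SA₁ SB₁ σ)).image (fun v => cP + v) := by
      rw [Finset.image_image]
      exact Finset.image_congr (fun σ hσ => hPc σ hσ)
    rw [himP]
    refine RVBAux.li_shift cP _ hμP ?_ hindp
    intro v hv
    obtain ⟨σ, _, rfl⟩ := Finset.mem_image.1 hv
    exact RVBAux.coeff_genp0_indB SA₁ SB₁ σ
  have hLIQ : LinearIndependent ℂ
      (fun x : (↑(Ψ.image Q) : Set (MvPolynomial (Fin (2 * ν)) ℂ)) =>
        (x : MvPolynomial (Fin (2 * ν)) ℂ)) := by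
    have himQ : Ψ.image Q
        = (Ψ.image (fun σ => RVBAux.genp0 ν SA₂ SB₂ σ)).image (fun v => cQ + v) := by
      rw [Finset.image_image]
      exact Finset.image_congr (fun σ hσ => hQc σ hσ)
    rw [himQ]
    refine RVBAux.li_shift cQ _ hμQ ?_ hindq
    intro v hv
    obtain ⟨σ, _, rfl⟩ := Finset.mem_image.1 hv
    exact RVBAux.coeff_genp0_indB SA₂ SB₂ σ
  -- dual functionals
  obtain ⟨gp1, hgp1⟩ := RVBAux.exists_dual (Ψ.image P) hLIP (Finset.mem_image_of_mem P hσ₁)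
  obtain ⟨gp2, hgp2⟩ := RVBAux.exists_dual (Ψ.image P) hLIP (Finset.mem_image_of_mem P hσ₂)
  obtain ⟨gq1, hgq1⟩ := RVBAux.exists_dual (Ψ.image Q) hLIQ (Finset.mem_image_of_mem Q hσ₁)
  obtain ⟨gq2, hgq2⟩ := RVBAux.exists_dual (Ψ.image Q) hLIQ (Finset.mem_image_of_mem Q hσ₂)
  have hgp1' : ∀ v ∈ Ψ.image P, gp1 v = if v = P σ₁ then (1:ℂ) else 0 :=
    by intro v hv; rw [hgp1 v hv]; by_cases h : v = P σ₁ <;> simp [h]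
  have hgp2' : ∀ v ∈ Ψ.image P, gp2 v = if v = P σ₂ then (1:ℂ) else 0 :=
    by intro v hv; rw [hgp2 v hv]; by_cases h : v = P σ₂ <;> simp [h]
  have hgq1' : ∀ v ∈ Ψ.image Q, gq1 v = if v = Q σ₁ then (1:ℂ) else 0 :=
    by intro v hv; rw [hgq1 v hv]; by_cases h : v = Q σ₁ <;> simp [h]
  have hgq2' : ∀ v ∈ Ψ.image Q, gq2 v = if v = Q σ₂ then (1:ℂ) else 0 :=
    by intro v hv; rw [hgq2 v hv]; by_cases h : v = Q σ₂ <;> simp [h]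
  -- support sets
  set Tp := Ψ.biUnion (fun σ => (P σ).support) with hTpdef
  set Tq := Ψ.biUnion (fun σ => (Q σ).support) with hTqdef
  have hPsupp : ∀ σ ∈ Ψ, ∀ d ∈ (P σ).support, ∀ i ∈ d.support, i ∈ E := by
    intro σ hσ
    refine RVBAux.support_prod_sub SA₁ σ E ?_ ?_
    · intro t ht
      rw [hSA₁def] at ht
      exact (Finset.mem_filter.1 ht).2
    · intro t ht
      have h1 : σ t ∈ SB₁ := (himg₁ σ hσ) ▸ Finset.mem_image_of_mem _ ht
      rw [hSB₁def] at h1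
      exact (Finset.mem_filter.1 h1).2
  have hQsupp : ∀ σ ∈ Ψ, ∀ d ∈ (Q σ).support, ∀ i ∈ d.support, i ∉ E := by
    intro σ hσ d hd i hi
    have h1 : i ∈ Eᶜ := by
      refine RVBAux.support_prod_sub SA₂ σ Eᶜ ?_ ?_ d hd i hi
      · intro t ht
        rw [hSA₂def] at ht
        exact Finset.mem_compl.2 (Finset.mem_filter.1 ht).2
      · intro t ht
        have h2 : σ t ∈ SB₂ := (himg₂ σ hσ) ▸ Finset.mem_image_of_mem _ ht
        rw [hSB₂def] at h2
        exact Finset.mem_compl.2 (Finset.mem_filter.1 h2).2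
    exact Finset.mem_compl.1 h1
  have hTp : ∀ m ∈ Tp, ∀ i ∈ (m : Fin (2 * ν) →₀ ℕ).support, i ∈ E := by
    intro m hm
    obtain ⟨σ, hσ, hmσ⟩ := Finset.mem_biUnion.1 hm
    exact hPsupp σ hσ m hmσ
  have hTq : ∀ m ∈ Tq, ∀ i ∈ (m : Fin (2 * ν) →₀ ℕ).support, i ∉ E := by
    intro m hm
    obtain ⟨σ, hσ, hmσ⟩ := Finset.mem_biUnion.1 hm
    exact hQsupp σ hσ m hmσ
  -- the bilinear functional
  set fP : (MvPolynomial (Fin (2 * ν)) ℂ →ₗ[ℂ] ℂ) → MvPolynomial (Fin (2 * ν)) ℂ → ℂ :=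
    fun g u => ∑ m ∈ Tp, coeff m u * g (monomial m 1) with hfPdef
  set fQ : (MvPolynomial (Fin (2 * ν)) ℂ →ₗ[ℂ] ℂ) → MvPolynomial (Fin (2 * ν)) ℂ → ℂ :=
    fun g u => ∑ m ∈ Tq, coeff m u * g (monomial m 1) with hfQdef
  set Lam : (MvPolynomial (Fin (2 * ν)) ℂ →ₗ[ℂ] ℂ) → (MvPolynomial (Fin (2 * ν)) ℂ →ₗ[ℂ] ℂ)
      → MvPolynomial (Fin (2 * ν)) ℂ → ℂ :=
    fun gp gq h => ∑ m ∈ Tp, ∑ m' ∈ Tq,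
      coeff (m + m') h * (gp (monomial m 1) * gq (monomial m' 1)) with hLamdef
  have hLammul : ∀ gp gq u v, (∀ d ∈ u.support, ∀ i ∈ d.support, i ∈ E) →
      (∀ d ∈ v.support, ∀ i ∈ d.support, i ∉ E) →
      Lam gp gq (u * v) = fP gp u * fQ gq v := by
    intro gp gq u v hu hv
    rw [hLamdef, hfPdef, hfQdef]
    simp only
    rw [Finset.sum_mul_sum]
    refine Finset.sum_congr rfl fun m hm => Finset.sum_congr rfl fun m' hm' => ?_
    rw [RVBAux.coeff_mul_split E u v hu hv m m' (hTp m hm) (hTq m' hm')]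
    ring
  have hLamF : ∀ gp gq, Lam gp gq (rvbPoly ν Ψ) = ∑ σ ∈ Ψ, fP gp (P σ) * fQ gq (Q σ) := by
    intro gp gq
    have h1 : rvbPoly ν Ψ = ∑ σ ∈ Ψ, P σ * Q σ := by
      rw [rvbPoly]
      exact Finset.sum_congr rfl fun σ _ => hPQ σ
    have h2 : Lam gp gq (∑ σ ∈ Ψ, P σ * Q σ) = ∑ σ ∈ Ψ, Lam gp gq (P σ * Q σ) := by
      rw [hLamdef]
      simp only [coeff_sum, Finset.sum_mul]
      refine Eq.trans (Finset.sum_congr rfl fun m _ => Finset.sum_comm) ?_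
      exact Finset.sum_comm
    rw [h1, h2]
    exact Finset.sum_congr rfl fun σ hσ => hLammul gp gq _ _ (hPsupp σ hσ) (hQsupp σ hσ)
  have hfPg : ∀ g : MvPolynomial (Fin (2 * ν)) ℂ →ₗ[ℂ] ℂ, ∀ σ ∈ Ψ, fP g (P σ) = g (P σ) :=
    fun g σ hσ => RVBAux.pairing_eq g Tp (P σ)
      (by rw [hTpdef]; exact Finset.subset_biUnion_of_mem (fun σ => (P σ).support) hσ)
  have hfQg : ∀ g : MvPolynomial (Fin (2 * ν)) ℂ →ₗ[ℂ] ℂ, ∀ σ ∈ Ψ, fQ g (Q σ) = g (Q σ) :=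
    fun g σ hσ => RVBAux.pairing_eq g Tq (Q σ)
      (by rw [hTqdef]; exact Finset.subset_biUnion_of_mem (fun σ => (Q σ).support) hσ)
  -- counting
  set N : Equiv.Perm (Fin ν) → Equiv.Perm (Fin ν) → ℕ :=
    fun τ₁ τ₂ => (Ψ.filter (fun σ => P σ = P τ₁ ∧ Q σ = Q τ₂)).card with hNdef
  have hcount : ∀ (τ₁ τ₂ : Equiv.Perm (Fin ν))
      (gp gq : MvPolynomial (Fin (2 * ν)) ℂ →ₗ[ℂ] ℂ),
      (∀ v ∈ Ψ.image P, gp v = if v = P τ₁ then 1 else 0) →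
      (∀ v ∈ Ψ.image Q, gq v = if v = Q τ₂ then 1 else 0) →
      Lam gp gq (rvbPoly ν Ψ) = (N τ₁ τ₂ : ℂ) := by
    intro τ₁ τ₂ gp gq hgp hgq
    rw [hLamF]
    have h1 : ∀ σ ∈ Ψ, fP gp (P σ) * fQ gq (Q σ)
        = if P σ = P τ₁ ∧ Q σ = Q τ₂ then (1 : ℂ) else 0 := by
      intro σ hσ
      rw [hfPg gp σ hσ, hfQg gq σ hσ, hgp _ (Finset.mem_image_of_mem P hσ),
        hgq _ (Finset.mem_image_of_mem Q hσ)]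
      by_cases h1 : P σ = P τ₁ <;> by_cases h2 : Q σ = Q τ₂ <;> simp [h1, h2]
    rw [Finset.sum_congr rfl h1, Finset.sum_boole, hNdef]
  -- the split side
  have hpsupp : ∀ d ∈ p.support, ∀ i ∈ d.support, i ∈ E :=
    fun d hd i hi => hpv ((mem_vars i).2 ⟨d, hd, hi⟩)
  have hqsupp : ∀ d ∈ q.support, ∀ i ∈ d.support, i ∉ E :=
    fun d hd i hi => Finset.mem_compl.1 (hqv ((mem_vars i).2 ⟨d, hd, hi⟩))
  have hLampq : ∀ gp gq : MvPolynomial (Fin (2 * ν)) ℂ →ₗ[ℂ] ℂ,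
      Lam gp gq (rvbPoly ν Ψ) = fP gp p * fQ gq q := by
    intro gp gq
    rw [hpq]
    exact hLammul gp gq p q hpsupp hqsupp
  have e11 : (N σ₁ σ₁ : ℂ) = fP gp1 p * fQ gq1 q := by
    rw [← hcount σ₁ σ₁ gp1 gq1 hgp1' hgq1', hLampq]
  have e12 : (N σ₁ σ₂ : ℂ) = fP gp1 p * fQ gq2 q := by
    rw [← hcount σ₁ σ₂ gp1 gq2 hgp1' hgq2', hLampq]
  have e21 : (N σ₂ σ₁ : ℂ) = fP gp2 p * fQ gq1 q := by
    rw [← hcount σ₂ σ₁ gp2 gq1 hgp2' hgq1', hLampq]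
  have e22 : (N σ₂ σ₂ : ℂ) = fP gp2 p * fQ gq2 q := by
    rw [← hcount σ₂ σ₂ gp2 gq2 hgp2' hgq2', hLampq]
  have hN11 : 1 ≤ N σ₁ σ₁ := by
    rw [hNdef]
    exact Finset.card_pos.2 ⟨σ₁, Finset.mem_filter.2 ⟨hσ₁, rfl, rfl⟩⟩
  have hN22 : 1 ≤ N σ₂ σ₂ := by
    rw [hNdef]
    exact Finset.card_pos.2 ⟨σ₂, Finset.mem_filter.2 ⟨hσ₂, rfl, rfl⟩⟩
  have hprod : (N σ₁ σ₂ : ℂ) * (N σ₂ σ₁ : ℂ) = (N σ₁ σ₁ : ℂ) * (N σ₂ σ₂ : ℂ) := by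
    rw [e11, e12, e21, e22]
    ring
  have hNne : N σ₁ σ₂ ≠ 0 := by
    intro h0
    rw [h0] at hprod
    simp only [Nat.cast_zero, zero_mul] at hprod
    rcases mul_eq_zero.1 hprod.symm with h | h
    · rw [Nat.cast_eq_zero] at h
      omega
    · rw [Nat.cast_eq_zero] at h
      omega
  obtain ⟨σ, hσmem⟩ := Finset.card_pos.1 (Nat.pos_of_ne_zero hNne)
  obtain ⟨hσΨ, hPeq, hQeq⟩ := Finset.mem_filter.1 hσmem
  refine ⟨σ, hσΨ, ?_, ?_⟩
  · intro t htE
    have h1 : RVBAux.genp0 ν SA₁ SB₁ σ = RVBAux.genp0 ν SA₁ SB₁ σ₁ := by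
      have h2 := hPeq
      rw [hPc σ hσΨ, hPc σ₁ hσ₁] at h2
      exact add_left_cancel h2
    exact RVBAux.genp0_inj SA₁ SB₁ σ σ₁ h2A (himg₁ σ hσΨ) (himg₁ σ₁ hσ₁) h1 t
      (by rw [hSA₁def]; exact Finset.mem_filter.2 ⟨Finset.mem_univ t, htE⟩)
  · intro t htE
    have h1 : RVBAux.genp0 ν SA₂ SB₂ σ = RVBAux.genp0 ν SA₂ SB₂ σ₂ := by
      have h2 := hQeq
      rw [hQc σ hσΨ, hQc σ₂ hσ₂] at h2
      exact add_left_cancel h2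
    exact RVBAux.genp0_inj SA₂ SB₂ σ σ₂ h2B (himg₂ σ hσΨ) (himg₂ σ₂ hσ₂) h1 t
      (by rw [hSA₂def]; exact Finset.mem_filter.2 ⟨Finset.mem_univ t, htE⟩)
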